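/- arXiv:math/0112251 — 2 statements merged into one kernel-verified Lean document; each statement's English description precedes it below -/
import Mathlib

section
/- Let Δ^P ⊆ Δ, let λ ∈ V be dominant, let w ∈ W_P, and set μ := w(λ + ρ) − ρ. Let s be any element of the subgroup of W generated by the reflections s_γ for those γ ∈ Φ^P with ⟨μ, γ∨⟩ = 0. Then s(Φ_w) = Φ_w and s(wλ) = wλ. -/
noncomputable section

open scoped RealInnerProductSpace

variable {V : Type*} [NormedAddCommGroup V] [InnerProductSpace ℝ V] [FiniteDimensional ℝ V]

/-- The reflection in the vector `γ` (as a function). -/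
def sRefl (γ v : V) : V := v - (2 * ⟪v, γ⟫ / ⟪γ, γ⟫) • γ

/-- The coroot `γ∨ = 2γ/⟨γ,γ⟩` of `γ`. -/
def coroot (γ : V) : V := (2 / ⟪γ, γ⟫) • γ

/-- The Weyl group `W`: the subgroup of linear automorphisms generated by the
reflections in the roots. -/
def weylGroup (Φ : Finset V) : Subgroup (V ≃ₗ[ℝ] V) :=
  Subgroup.closure {w : V ≃ₗ[ℝ] V | ∃ γ ∈ Φ, ∀ v, w v = sRefl γ v}

/-- `Φ_w = {γ ∈ Φ⁺ : w⁻¹ γ ∈ −Φ⁺}`. -/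
def inversions (Φpos : Finset V) (w : V ≃ₗ[ℝ] V) : Set V :=
  {γ | γ ∈ Φpos ∧ -(w.symm γ) ∈ Φpos}

/-- `ℓ(w) = #Φ_w`. -/
def len (Φpos : Finset V) (w : V ≃ₗ[ℝ] V) : ℕ := (inversions Φpos w).ncard

/-- `Φ^P = Φ ∩ span(Δ^P)`. -/
def levi (Φ ΔP : Finset V) : Set V :=
  {γ | γ ∈ Φ ∧ γ ∈ Submodule.span ℝ (ΔP : Set V)}

/-- `W_P = {w ∈ W : Φ_w ∩ Φ^P = ∅}`, the minimal length coset representatives of `W^P\W`. -/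
def minimalCosetReps (Φ Φpos ΔP : Finset V) : Set (V ≃ₗ[ℝ] V) :=
  {w | w ∈ weylGroup Φ ∧ inversions Φpos w ∩ levi Φ ΔP = ∅}

/-- `pr_S`: the orthogonal projection onto the orthogonal complement of `span S`. -/
def pr (S : Set V) (v : V) : V :=
  (Submodule.orthogonalProjection (Submodule.span ℝ S)ᗮ v : V)

/-- `Φ` is a finite (possibly non-reduced) root system spanning `V`, with base `Δ`
and associated positive system `Φpos`. -/
structure IsRootBase (Φ Δ Φpos : Finset V) : Prop where
  span_top : Submodule.span ℝ (Φ : Set V) = ⊤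
  zero_not_mem : (0 : V) ∉ Φ
  refl_mem : ∀ γ ∈ Φ, ∀ δ ∈ Φ, sRefl γ δ ∈ Φ
  base_subset_pos : (Δ : Set V) ⊆ (Φpos : Set V)
  pos_subset : (Φpos : Set V) ⊆ (Φ : Set V)
  mem_or_neg_mem : ∀ γ ∈ Φ, γ ∈ Φpos ∨ -γ ∈ Φpos
  not_mem_and_neg_mem : ∀ γ ∈ Φpos, -γ ∉ Φpos
  indep : LinearIndependent ℝ (fun x : (Δ : Set V) => (x : V))
  pos_comb : ∀ γ ∈ Φpos, ∃ c : V → ℝ, (∀ α ∈ Δ, 0 ≤ c α) ∧ γ = ∑ α ∈ Δ, c α • α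

set_option linter.unusedSectionVars false
set_option maxHeartbeats 1000000

section Helpers
variable {Φ Δ Φpos ΔP : Finset V}

lemma span_base_top (h : IsRootBase Φ Δ Φpos) : Submodule.span ℝ ((Δ : Set V)) = ⊤ := by
  rw [← top_le_iff, ← h.span_top, Submodule.span_le]
  intro γ hγ
  have key : ∀ δ ∈ Φpos, δ ∈ Submodule.span ℝ ((Δ : Set V)) := by
    intro δ hδ
    obtain ⟨c, _, hc⟩ := h.pos_comb δ hδ
    rw [hc]
    exact Submodule.sum_smul_mem _ _ fun α hα => Submodule.subset_span hα
  rcases h.mem_or_neg_mem γ hγ with hp | hn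
  · exact key γ hp
  · simpa using (Submodule.span ℝ ((Δ:Set V))).neg_mem (key _ hn)

lemma exists_functional (h : IsRootBase Φ Δ Φpos) (S : Finset V) (hS : S ⊆ Δ) :
    ∃ F : V →ₗ[ℝ] ℝ, (∀ v ∈ Submodule.span ℝ ((S : Set V)), F v = 0) ∧
      (∀ δ ∈ Φpos, 0 ≤ F δ) ∧ (∀ δ ∈ Φpos, F δ = 0 → δ ∈ Submodule.span ℝ ((S : Set V))) := by
  classical
  have hspan : ⊤ ≤ Submodule.span ℝ (Set.range (fun x : (Δ : Set V) => (x : V))) := by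
    rw [Subtype.range_coe]; exact (span_base_top h).ge
  let b : Module.Basis (Δ : Set V) ℝ V := Module.Basis.mk h.indep hspan
  have hb : ∀ i : (Δ : Set V), b i = (i : V) := fun i => Module.Basis.mk_apply _ _ i
  let F : V →ₗ[ℝ] ℝ :=
    ∑ i ∈ Finset.univ.filter (fun i : (Δ : Set V) => (i : V) ∉ S), b.coord i
  have hFapply : ∀ v, F v = ∑ i ∈ Finset.univ.filter (fun i : (Δ : Set V) => (i : V) ∉ S),
      b.repr v i := by
    intro v
    simp [F, Module.Basis.coord_apply, LinearMap.sum_apply]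
  have hFbase : ∀ i : (Δ : Set V), F (i : V) = if (i : V) ∈ S then 0 else 1 := by
    intro i
    have hrepr : b.repr (i : V) = Finsupp.single i 1 := by rw [← hb i, Module.Basis.repr_self]
    rw [hFapply]
    simp only [hrepr, Finsupp.single_apply]
    rw [Finset.sum_ite_eq]
    by_cases hiS : (i : V) ∈ S <;> simp [hiS]
  have hFbase' : ∀ α (hα : α ∈ Δ), F α = if α ∈ S then 0 else 1 := fun α hα => hFbase ⟨α, hα⟩
  refine ⟨F, ?_, ?_, ?_⟩
  · intro v hv
    refine Submodule.span_induction (p := fun v _ => F v = 0) ?_ ?_ ?_ ?_ hv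
    · intro x hx
      have hx' : x ∈ S := hx
      rw [hFbase' x (hS hx'), if_pos hx']
    · simp
    · intro x y _ _ hx hy; rw [map_add, hx, hy, add_zero]
    · intro a x _ hx; rw [map_smul, hx, smul_zero]
  · intro δ hδ
    obtain ⟨c, hc0, hc⟩ := h.pos_comb δ hδ
    rw [hc, map_sum]
    refine Finset.sum_nonneg fun α hα => ?_
    rw [map_smul, smul_eq_mul, hFbase' α hα]
    split
    · simp
    · simpa using hc0 α hα
  · intro δ hδ hFδ
    obtain ⟨c, hc0, hc⟩ := h.pos_comb δ hδ
    have hterm : ∀ α ∈ Δ, F (c α • α) = if α ∈ S then 0 else c α := by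
      intro α hα
      rw [map_smul, smul_eq_mul, hFbase' α hα]
      split <;> ring
    rw [hc, map_sum, Finset.sum_congr rfl hterm] at hFδ
    have hall := (Finset.sum_eq_zero_iff_of_nonneg (by
      intro α hα
      split
      · exact le_refl 0
      · exact hc0 α hα)).mp hFδ
    rw [hc]
    refine Submodule.sum_mem _ fun α hα => ?_
    by_cases hαS : α ∈ S
    · exact Submodule.smul_mem _ _ (Submodule.subset_span hαS)
    · have hcα : c α = 0 := by simpa [hαS] using hall α hα
      rw [hcα, zero_smul]
      exact Submodule.zero_mem _

lemma inner_sRefl (γ a b : V) : ⟪sRefl γ a, b⟫ = ⟪a, b⟫ - (2 * ⟪a, γ⟫ / ⟪γ, γ⟫) * ⟪γ, b⟫ := by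
  simp [sRefl, inner_sub_left, real_inner_smul_left]

lemma inner_sRefl' (γ a b : V) : ⟪a, sRefl γ b⟫ = ⟪a, b⟫ - (2 * ⟪b, γ⟫ / ⟪γ, γ⟫) * ⟪a, γ⟫ := by
  rw [real_inner_comm, inner_sRefl, real_inner_comm b a, real_inner_comm γ a]

lemma sRefl_of_inner_zero (γ v : V) (h : ⟪v, γ⟫ = 0) : sRefl γ v = v := by
  simp [sRefl, h]

lemma sRefl_neg (γ v : V) : sRefl (-γ) v = sRefl γ v := by
  unfold sRefl
  rw [inner_neg_neg, inner_neg_right,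
    show (2 * -⟪v,γ⟫/⟪γ,γ⟫ : ℝ) = -(2*⟪v,γ⟫/⟪γ,γ⟫) by ring]
  module

lemma inner_sRefl_self (γ v : V) (hγ : ⟪γ, γ⟫ ≠ (0:ℝ)) : ⟪sRefl γ v, γ⟫ = -⟪v, γ⟫ := by
  rw [inner_sRefl]; field_simp; ring

lemma sRefl_invol (γ v : V) (hγ : ⟪γ, γ⟫ ≠ (0:ℝ)) : sRefl γ (sRefl γ v) = v := by
  have h := inner_sRefl_self γ v hγ
  rw [sRefl, h, sRefl,
    show (2 * -⟪v,γ⟫ / ⟪γ,γ⟫ : ℝ) = -(2 * ⟪v,γ⟫ / ⟪γ,γ⟫) by ring]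
  module

lemma sRefl_isometry (γ : V) (hγ : ⟪γ, γ⟫ ≠ (0:ℝ)) (a b : V) :
    ⟪sRefl γ a, sRefl γ b⟫ = ⟪a, b⟫ := by
  rw [inner_sRefl, inner_sRefl', inner_sRefl', real_inner_comm γ b]
  field_simp
  ring

lemma weyl_props (h : IsRootBase Φ Δ Φpos) (w : V ≃ₗ[ℝ] V) (hw : w ∈ weylGroup Φ) :
    (∀ δ ∈ Φ, w δ ∈ Φ) ∧ (∀ δ ∈ Φ, w.symm δ ∈ Φ) ∧ (∀ a b : V, ⟪w a, w b⟫ = ⟪a, b⟫) := by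
  refine Subgroup.closure_induction
    (p := fun u _ => (∀ δ ∈ Φ, u δ ∈ Φ) ∧ (∀ δ ∈ Φ, u.symm δ ∈ Φ) ∧ (∀ a b : V, ⟪u a, u b⟫ = ⟪a, b⟫))
    ?_ ?_ ?_ ?_ hw
  · rintro u ⟨γ, hγ, hu⟩
    have hγ0 : γ ≠ 0 := fun h0 => h.zero_not_mem (h0 ▸ hγ)
    have hγγ : ⟪γ, γ⟫ ≠ (0:ℝ) := fun h0 => hγ0 (inner_self_eq_zero.mp h0)
    have hsymm : ∀ v, u.symm v = sRefl γ v := by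
      intro v
      have h1 : u (sRefl γ v) = v := by rw [hu, sRefl_invol γ v hγγ]
      calc u.symm v = u.symm (u (sRefl γ v)) := by rw [h1]
        _ = sRefl γ v := u.symm_apply_apply _
    exact ⟨fun δ hδ => by rw [hu]; exact h.refl_mem γ hγ δ hδ,
      fun δ hδ => by rw [hsymm]; exact h.refl_mem γ hγ δ hδ,
      fun a b => by rw [hu, hu]; exact sRefl_isometry γ hγγ a b⟩
  · exact ⟨fun δ hδ => hδ, fun δ hδ => hδ, fun a b => rfl⟩
  · rintro x y _ _ ⟨hx1, hx2, hx3⟩ ⟨hy1, hy2, hy3⟩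
    refine ⟨fun δ hδ => hx1 _ (hy1 δ hδ), fun δ hδ => hy2 _ (hx2 δ hδ), fun a b => ?_⟩
    have : ∀ v, (x * y) v = x (y v) := fun v => rfl
    rw [this, this, hx3, hy3]
  · rintro x _ ⟨hx1, hx2, hx3⟩
    refine ⟨fun δ hδ => hx2 δ hδ, fun δ hδ => hx1 δ hδ, fun a b => ?_⟩
    have : ∀ v, (x⁻¹ : V ≃ₗ[ℝ] V) v = x.symm v := fun v => rfl
    rw [this, this, ← hx3 (x.symm a) (x.symm b), x.apply_symm_apply, x.apply_symm_apply]

open scoped Classical in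
lemma wrho (h : IsRootBase Φ Δ Φpos) (w : V ≃ₗ[ℝ] V)
    (hwΦ : ∀ δ ∈ Φ, w δ ∈ Φ) (hwΦ' : ∀ δ ∈ Φ, w.symm δ ∈ Φ)
    (ρ : V) (hρ : ρ = (2⁻¹ : ℝ) • ∑ γ ∈ Φpos, γ) :
    w ρ = ρ - ∑ β ∈ Φpos.filter (fun β => -(w.symm β) ∈ Φpos), β := by
  set Inv := Φpos.filter (fun β => -(w.symm β) ∈ Φpos) with hInv
  have hpos : ∀ δ ∈ Φpos, δ ∈ Φ := fun δ hδ => h.pos_subset hδ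
  have part1 : ∑ δ ∈ Φpos.filter (fun δ => w δ ∈ Φpos), w δ = ∑ β ∈ Φpos \ Inv, β := by
    refine Finset.sum_nbij' (fun δ => w δ) (fun β => w.symm β) ?_ ?_ ?_ ?_ ?_
    · intro a ha
      rw [Finset.mem_filter] at ha
      rw [Finset.mem_sdiff, hInv, Finset.mem_filter]
      refine ⟨ha.2, fun hc => ?_⟩
      rw [LinearEquiv.symm_apply_apply] at hc
      exact h.not_mem_and_neg_mem a ha.1 hc.2
    · intro a ha
      rw [Finset.mem_sdiff, hInv, Finset.mem_filter] at ha
      rw [Finset.mem_filter]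
      have h1 : w.symm a ∈ Φ := hwΦ' a (hpos a ha.1)
      have h2 : w.symm a ∈ Φpos := by
        rcases h.mem_or_neg_mem _ h1 with hp | hn
        · exact hp
        · exact absurd ⟨ha.1, hn⟩ ha.2
      exact ⟨h2, by rw [LinearEquiv.apply_symm_apply]; exact ha.1⟩
    · intro a _; exact w.symm_apply_apply a
    · intro a _; exact w.apply_symm_apply a
    · intro a _; rfl
  have part2 : ∑ δ ∈ Φpos.filter (fun δ => ¬ w δ ∈ Φpos), w δ = ∑ β ∈ Inv, (-β) := by
    refine Finset.sum_nbij' (fun δ => -(w δ)) (fun β => -(w.symm β)) ?_ ?_ ?_ ?_ ?_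
    · intro a ha
      rw [Finset.mem_filter] at ha
      rw [hInv, Finset.mem_filter]
      have h1 : w a ∈ Φ := hwΦ a (hpos a ha.1)
      have h2 : -(w a) ∈ Φpos := by
        rcases h.mem_or_neg_mem _ h1 with hp | hn
        · exact absurd hp ha.2
        · exact hn
      refine ⟨h2, ?_⟩
      rw [map_neg, LinearEquiv.symm_apply_apply, neg_neg]
      exact ha.1
    · intro a ha
      rw [hInv, Finset.mem_filter] at ha
      rw [Finset.mem_filter]
      refine ⟨ha.2, ?_⟩
      rw [map_neg, LinearEquiv.apply_symm_apply]
      exact h.not_mem_and_neg_mem a ha.1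
    · intro a _; simp
    · intro a _; simp
    · intro a _; simp
  have hsplit := Finset.sum_filter_add_sum_filter_not Φpos (fun δ => w δ ∈ Φpos) (fun δ => w δ)
  have hsd : (∑ β ∈ Φpos \ Inv, β) + ∑ β ∈ Inv, β = ∑ β ∈ Φpos, β :=
    Finset.sum_sdiff (Finset.filter_subset _ _)
  have hneg : ∑ β ∈ Inv, (-β) = -∑ β ∈ Inv, β := Finset.sum_neg_distrib _
  have hwsum : w (∑ γ ∈ Φpos, γ) = ∑ δ ∈ Φpos, w δ := map_sum w _ _
  rw [hρ, map_smul, hwsum, ← hsplit, part1, part2, hneg]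
  have := hsd
  rw [← hsd]
  module

lemma real_inner_self_pos' {x : V} (hx : x ≠ 0) : (0:ℝ) < ⟪x, x⟫ :=
  not_le.mp (fun hle => hx (real_inner_self_nonpos.mp hle))

open scoped Classical in
lemma cartier_gen (h : IsRootBase Φ Δ Φpos) (hΔP : ΔP ⊆ Δ)
    (lam : V) (hdom : ∀ α ∈ Δ, 0 ≤ ⟪lam, coroot α⟫)
    (w : V ≃ₗ[ℝ] V) (hwW : w ∈ weylGroup Φ)
    (hwmin : inversions Φpos w ∩ levi Φ ΔP = ∅)
    (ρ : V) (hρ : ρ = (2⁻¹ : ℝ) • ∑ γ ∈ Φpos, γ)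
    (γ : V) (hγlev : γ ∈ levi Φ ΔP) (hγpos : γ ∈ Φpos)
    (hμγ : ⟪w (lam + ρ) - ρ, γ⟫ = 0) :
    (∀ β ∈ inversions Φpos w, sRefl γ β ∈ inversions Φpos w) ∧ sRefl γ (w lam) = w lam := by
  obtain ⟨hwΦ, hwΦ', hiso⟩ := weyl_props h w hwW
  obtain ⟨hγΦ, hγspan⟩ := hγlev
  have hposΦ : ∀ δ ∈ Φpos, δ ∈ Φ := fun δ hδ => h.pos_subset hδ
  have hne0 : ∀ δ ∈ Φ, δ ≠ (0:V) := fun δ hδ h0 => h.zero_not_mem (h0 ▸ hδ)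
  have hγ0 : γ ≠ 0 := hne0 γ hγΦ
  have hγγpos : (0:ℝ) < ⟪γ, γ⟫ := real_inner_self_pos' hγ0
  have hγγ : ⟪γ, γ⟫ ≠ (0:ℝ) := ne_of_gt hγγpos
  obtain ⟨F, hF0, hFnn, hFz⟩ := exists_functional h ΔP hΔP
  obtain ⟨G, -, hGnn, hGz⟩ := exists_functional h ∅ (Finset.empty_subset Δ)
  have hGpos : ∀ δ ∈ Φpos, 0 < G δ := by
    intro δ hδ
    rcases lt_or_eq_of_le (hGnn δ hδ) with hlt | heq
    · exact hlt
    · exfalso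
      have := hFz -- dummy
      have hz : δ ∈ Submodule.span ℝ ((∅ : Finset V) : Set V) := hGz δ hδ heq.symm
      simp only [Finset.coe_empty, Submodule.span_empty, Submodule.mem_bot] at hz
      exact hne0 δ (hposΦ δ hδ) hz
  -- w⁻¹ γ is positive
  have hwγ : w.symm γ ∈ Φpos := by
    have h1 : w.symm γ ∈ Φ := hwΦ' γ hγΦ
    rcases h.mem_or_neg_mem _ h1 with hp | hn
    · exact hp
    · exfalso
      have : γ ∈ inversions Φpos w ∩ levi Φ ΔP := ⟨⟨hγpos, hn⟩, ⟨hγΦ, hγspan⟩⟩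
      rw [hwmin] at this
      exact this
  -- step A
  have hstep : ∀ β ∈ inversions Φpos w, 0 < ⟪β, γ⟫ → sRefl γ β ∈ inversions Φpos w := by
    rintro β ⟨hβpos, hβinv⟩ hβγ
    have hβΦ : β ∈ Φ := hposΦ β hβpos
    have hβnotspan : β ∉ Submodule.span ℝ ((ΔP : Finset V) : Set V) := by
      intro hc
      have : β ∈ inversions Φpos w ∩ levi Φ ΔP := ⟨⟨hβpos, hβinv⟩, ⟨hβΦ, hc⟩⟩
      rw [hwmin] at this
      exact this
    set c : ℝ := 2 * ⟪β, γ⟫ / ⟪γ, γ⟫ with hc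
    have hcpos : 0 < c := by
      apply div_pos _ hγγpos
      linarith
    have hsβ : sRefl γ β = β - c • γ := rfl
    have hsβΦ : sRefl γ β ∈ Φ := h.refl_mem γ hγΦ β hβΦ
    have hFγ : F γ = 0 := hF0 γ hγspan
    have hFsβ : F (sRefl γ β) = F β := by
      rw [hsβ, map_sub, map_smul, hFγ, smul_zero, sub_zero]
    have hFβpos : 0 < F β := by
      rcases lt_or_eq_of_le (hFnn β hβpos) with hlt | heq
      · exact hlt
      · exact absurd (hFz β hβpos heq.symm) hβnotspan
    have hsβpos : sRefl γ β ∈ Φpos := by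
      rcases h.mem_or_neg_mem _ hsβΦ with hp | hn
      · exact hp
      · exfalso
        have := hFnn _ hn
        rw [map_neg, hFsβ] at this
        linarith
    have hwsym : w.symm (sRefl γ β) = w.symm β - c • w.symm γ := by
      rw [hsβ, map_sub, map_smul]
    have hGneg : G (w.symm (sRefl γ β)) < 0 := by
      rw [hwsym, map_sub, map_smul, smul_eq_mul]
      have h1 : 0 < G (-(w.symm β)) := hGpos _ hβinv
      rw [map_neg] at h1
      have h2 : 0 ≤ G (w.symm γ) := le_of_lt (hGpos _ hwγ)
      nlinarith
    have hwsΦ : w.symm (sRefl γ β) ∈ Φ := hwΦ' _ hsβΦ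
    have : -(w.symm (sRefl γ β)) ∈ Φpos := by
      rcases h.mem_or_neg_mem _ hwsΦ with hp | hn
      · exact absurd (hGnn _ hp) (not_le.mpr hGneg)
      · exact hn
    exact ⟨hsβpos, this⟩
  -- the sum identity
  set Inv : Finset V := Φpos.filter (fun β => -(w.symm β) ∈ Φpos) with hInvdef
  have hInvset : inversions Φpos w = (Inv : Set V) := by
    ext x
    simp [inversions, hInvdef, Finset.mem_filter]
  have hwρ : w ρ = ρ - ∑ β ∈ Inv, β := wrho h w hwΦ hwΦ' ρ hρ
  have hsum : ⟪w lam, γ⟫ = ∑ β ∈ Inv, ⟪β, γ⟫ := by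
    have e1 : ⟪w (lam + ρ) - ρ, γ⟫
        = ⟪w lam, γ⟫ + ⟪w ρ, γ⟫ - ⟪ρ, γ⟫ := by
      rw [map_add, inner_sub_left, inner_add_left]
    have e2 : ⟪w ρ, γ⟫ = ⟪ρ, γ⟫ - ∑ β ∈ Inv, ⟪β, γ⟫ := by
      rw [hwρ, inner_sub_left, sum_inner]
    rw [e1, e2] at hμγ
    linarith
  -- nonnegativity of ⟪w lam, γ⟫
  have hlampos : ∀ δ ∈ Φpos, 0 ≤ ⟪lam, δ⟫ := by
    intro δ hδ
    obtain ⟨c, hc0, hceq⟩ := h.pos_comb δ hδ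
    rw [hceq, inner_sum]
    refine Finset.sum_nonneg fun α hα => ?_
    rw [real_inner_smul_right]
    have hα0 : α ≠ 0 := hne0 α (hposΦ α (h.base_subset_pos hα))
    have hααpos : (0:ℝ) < ⟪α, α⟫ := real_inner_self_pos' hα0
    have hd := hdom α hα
    rw [coroot, real_inner_smul_right] at hd
    have h2q : (0:ℝ) < 2 / ⟪α, α⟫ := by positivity
    have hlα : 0 ≤ ⟪lam, α⟫ := by nlinarith
    exact mul_nonneg (hc0 α hα) hlα
  have hwlam : 0 ≤ ⟪w lam, γ⟫ := by
    have : ⟪w lam, γ⟫ = ⟪lam, w.symm γ⟫ := by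
      conv_lhs => rw [show γ = w (w.symm γ) from (w.apply_symm_apply γ).symm]
      rw [hiso]
    rw [this]
    exact hlampos _ hwγ
  -- splitting of Inv
  set A : Finset V := Inv.filter (fun β => 0 < ⟪β, γ⟫) with hA
  set R : Finset V := Inv.filter (fun β => ¬ 0 < ⟪β, γ⟫) with hR
  have hARInv : (∑ β ∈ A, ⟪β, γ⟫) + ∑ β ∈ R, ⟪β, γ⟫ = ∑ β ∈ Inv, ⟪β, γ⟫ :=
    Finset.sum_filter_add_sum_filter_not Inv _ _
  have hinj : Set.InjOn (sRefl γ) A := by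
    intro a _ b _ hab
    have := congrArg (sRefl γ) hab
    rwa [sRefl_invol γ a hγγ, sRefl_invol γ b hγγ] at this
  have himg : A.image (sRefl γ) ⊆ R := by
    intro x hx
    rw [Finset.mem_image] at hx
    obtain ⟨β, hβA, hβx⟩ := hx
    rw [hA, Finset.mem_filter] at hβA
    have hβInv : β ∈ inversions Φpos w := by rw [hInvset]; exact hβA.1
    have h1 : sRefl γ β ∈ inversions Φpos w := hstep β hβInv hβA.2
    rw [hInvset] at h1
    rw [hR, Finset.mem_filter, ← hβx]
    refine ⟨h1, ?_⟩
    rw [inner_sRefl_self γ β hγγ]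
    push_neg
    linarith [hβA.2]
  have himgsum : ∑ β ∈ A.image (sRefl γ), ⟪β, γ⟫ = -∑ β ∈ A, ⟪β, γ⟫ := by
    rw [Finset.sum_image (fun a ha b hb hab => hinj (Finset.mem_coe.mpr ha) (Finset.mem_coe.mpr hb) hab)]
    rw [← Finset.sum_neg_distrib]
    exact Finset.sum_congr rfl fun β hβ => inner_sRefl_self γ β hγγ
  have hsd : (∑ β ∈ R \ A.image (sRefl γ), ⟪β, γ⟫) + ∑ β ∈ A.image (sRefl γ), ⟪β, γ⟫
      = ∑ β ∈ R, ⟪β, γ⟫ := Finset.sum_sdiff himg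
  have hrest_nonpos : ∀ β ∈ R \ A.image (sRefl γ), ⟪β, γ⟫ ≤ 0 := by
    intro β hβ
    rw [Finset.mem_sdiff, hR, Finset.mem_filter] at hβ
    push_neg at hβ
    linarith [hβ.1.2]
  have hsum_nonpos : ∑ β ∈ R \ A.image (sRefl γ), ⟪β, γ⟫ ≤ 0 :=
    Finset.sum_nonpos hrest_nonpos
  -- ⟪w lam, γ⟫ = rest-sum
  have hkey : ⟪w lam, γ⟫ = ∑ β ∈ R \ A.image (sRefl γ), ⟪β, γ⟫ := by
    rw [hsum, ← hARInv, ← hsd, himgsum]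
    ring
  have hwlam0 : ⟪w lam, γ⟫ = 0 := le_antisymm (hkey ▸ hsum_nonpos) hwlam
  have hrest0 : ∀ β ∈ R \ A.image (sRefl γ), ⟪β, γ⟫ = 0 := by
    have := (Finset.sum_eq_zero_iff_of_nonpos hrest_nonpos).mp (by rw [← hkey, hwlam0])
    exact this
  constructor
  · intro β hβ
    rcases lt_trichotomy (⟪β, γ⟫ : ℝ) 0 with hneg | hzero | hpos
    · -- β in R; must be in the image of A
      have hβInv : β ∈ Inv := by rwa [hInvset] at hβ
      have hβR : β ∈ R := by
        rw [hR, Finset.mem_filter]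
        exact ⟨hβInv, by push_neg; linarith⟩
      by_cases hβim : β ∈ A.image (sRefl γ)
      · rw [Finset.mem_image] at hβim
        obtain ⟨β', hβ'A, hβ'x⟩ := hβim
        rw [← hβ'x, sRefl_invol γ β' hγγ]
        rw [hA, Finset.mem_filter] at hβ'A
        rw [hInvset]
        exact hβ'A.1
      · exact absurd (hrest0 β (Finset.mem_sdiff.mpr ⟨hβR, hβim⟩)) (ne_of_lt hneg)
    · rw [sRefl_of_inner_zero γ β hzero]
      exact hβ
    · exact hstep β hβ hpos
  · exact sRefl_of_inner_zero _ _ hwlam0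
end Helpers


/-- equation (eqnCartier) in the proof of the Basic Lemma 16.2.
If `λ` is dominant, `w ∈ W_P`, `μ = w(λ+ρ) − ρ`, and `s` lies in the subgroup
generated by the reflections in the roots `γ ∈ Φ^P` with `⟨μ, γ∨⟩ = 0`, then
`s(Φ_w) = Φ_w` and `s(wλ) = wλ`. -/
theorem cartier
    {V : Type*} [NormedAddCommGroup V] [InnerProductSpace ℝ V] [FiniteDimensional ℝ V]
    (Φ Δ Φpos : Finset V) (h : IsRootBase Φ Δ Φpos)
    (ΔP : Finset V) (hΔP : ΔP ⊆ Δ)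
    (lam : V) (hdom : ∀ α ∈ Δ, 0 ≤ ⟪lam, coroot α⟫)
    (w : V ≃ₗ[ℝ] V) (hw : w ∈ minimalCosetReps Φ Φpos ΔP)
    (ρ : V) (hρ : ρ = (2⁻¹ : ℝ) • ∑ γ ∈ Φpos, γ)
    (μ : V) (hμ : μ = w (lam + ρ) - ρ)
    (s : V ≃ₗ[ℝ] V)
    (hs : s ∈ Subgroup.closure {u : V ≃ₗ[ℝ] V |
        ∃ γ ∈ levi Φ ΔP, ⟪μ, coroot γ⟫ = 0 ∧ ∀ v, u v = sRefl γ v}) :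
    (fun v => s v) '' inversions Φpos w = inversions Φpos w ∧ s (w lam) = w lam := by
  obtain ⟨hwW, hwmin⟩ := hw
  have hgen : ∀ u ∈ {u : V ≃ₗ[ℝ] V |
      ∃ γ ∈ levi Φ ΔP, ⟪μ, coroot γ⟫ = 0 ∧ ∀ v, u v = sRefl γ v},
      ((fun v => u v) '' inversions Φpos w = inversions Φpos w ∧ u (w lam) = w lam) := by
    rintro u ⟨γ, hγlev, hcor, hu⟩
    have hγΦ : γ ∈ Φ := hγlev.1
    have hγ0 : γ ≠ 0 := fun h0 => h.zero_not_mem (h0 ▸ hγΦ)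
    have hγγpos := real_inner_self_pos' hγ0
    have hγγ : ⟪γ, γ⟫ ≠ (0:ℝ) := ne_of_gt hγγpos
    have hμγ0 : ⟪μ, γ⟫ = 0 := by
      rw [coroot, real_inner_smul_right] at hcor
      have h2 : (2 / ⟪γ, γ⟫ : ℝ) ≠ 0 := by positivity
      exact (mul_eq_zero.mp hcor).resolve_left h2
    have hkey : (∀ β ∈ inversions Φpos w, sRefl γ β ∈ inversions Φpos w) ∧
        sRefl γ (w lam) = w lam := by
      rcases h.mem_or_neg_mem γ hγΦ with hp | hn
      · exact cartier_gen h hΔP lam hdom w hwW hwmin ρ hρ γ hγlev hp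
          (by rw [← hμ]; exact hμγ0)
      · have hres := cartier_gen h hΔP lam hdom w hwW hwmin ρ hρ (-γ)
          ⟨h.pos_subset hn, Submodule.neg_mem _ hγlev.2⟩ hn
          (by rw [← hμ, inner_neg_right, hμγ0, neg_zero])
        exact ⟨fun β hβ => by rw [← sRefl_neg]; exact hres.1 β hβ,
          by rw [← sRefl_neg]; exact hres.2⟩
    obtain ⟨hptw, hfix⟩ := hkey
    constructor
    · ext x
      constructor
      · rintro ⟨β, hβ, rfl⟩
        show u β ∈ inversions Φpos w
        rw [hu]
        exact hptw β hβ
      · intro hx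
        exact ⟨sRefl γ x, hptw x hx, by
          show u (sRefl γ x) = x
          rw [hu, sRefl_invol γ x hγγ]⟩
    · show u (w lam) = w lam
      rw [hu]
      exact hfix
  refine Subgroup.closure_induction
    (p := fun u _ => (fun v => u v) '' inversions Φpos w = inversions Φpos w ∧
      u (w lam) = w lam) hgen ?_ ?_ ?_ hs
  · exact ⟨by simp, rfl⟩
  · rintro x y _ _ ⟨hx1, hx2⟩ ⟨hy1, hy2⟩
    constructor
    · have hc : (fun v => (x*y) v) = (fun v => x v) ∘ (fun v => y v) := rfl
      rw [hc, Set.image_comp, hy1, hx1]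
    · show x (y (w lam)) = w lam
      rw [hy2, hx2]
  · rintro x hxcl ⟨hx1, hx2⟩
    constructor
    · have h1 : (fun v => (x⁻¹ : V ≃ₗ[ℝ] V) v) '' inversions Φpos w
          = (fun v => x.symm v) '' ((fun v => x v) '' inversions Φpos w) := by
        rw [hx1]
        rfl
      rw [h1, ← Set.image_comp]
      have h2 : ((fun v => x.symm v) ∘ fun v => x v) = id := funext fun v => x.symm_apply_apply v
      rw [h2, Set.image_id]
    · show x.symm (w lam) = w lam
      have h3 := congrArg x.symm hx2
      rw [x.symm_apply_apply] at h3
      exact h3.symm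
end
end

section
/- Assume the hypotheses (H1) (Υ̃)^ = Υ for every Υ ⊆ Δ_ℚ; (H2) κ(Θ̂) = (κ(Θ))^ for every Θ ⊆ Δ_ℝ; (H3) κ(Θ) = κ(((κ(Θ))^)~) for every Θ ⊆ Δ_ℝ such that ω(Θ) is ℚ-rational; and (GR) ('geometric rationality') ω(Υ̃) is ℚ-rational for every Υ ⊆ Δ_ℚ. Then: (a) (ω(Υ))~ = ω(Υ̃) for every Υ ⊆ Δ_ℚ; and (b) (ω(Θ))^ = ω(Θ̂) for every Θ ⊆ Δ_ℝ such that ω(Θ) is ℚ-rational. -/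
/-- A subset `S` of `α` is connected for the adjacency relation `adj`
if any two of its elements are joined by a path inside `S`. -/
def connAdj {α : Type*} (adj : α → α → Prop) (S : Set α) : Prop :=
  ∀ x ∈ S, ∀ y ∈ S, Relation.ReflTransGen (fun a b => a ∈ S ∧ b ∈ S ∧ adj a b) x y

/-- `Θ` is σ-connected: the induced subgraph on `Θ ∪ {∗}` is connected
(here `∗` is the distinguished extra element, modelled by `none`). -/
def sigmaConn {α : Type*} (adj : Option α → Option α → Prop) (Θ : Set α) : Prop :=
  connAdj adj (insert none (Option.some '' Θ))

/-- `κ(Θ)`: the union of all σ-connected subsets of `Θ`. -/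
def kap {α : Type*} (adj : Option α → Option α → Prop) (Θ : Set α) : Set α :=
  ⋃₀ {Υ : Set α | Υ ⊆ Θ ∧ sigmaConn adj Υ}

/-- `ω(Θ)`: the union of all subsets `Υ` with `κ(Υ) = κ(Θ)`. -/
def om {α : Type*} (adj : Option α → Option α → Prop) (Θ : Set α) : Set α :=
  ⋃₀ {Υ : Set α | kap adj Υ = kap adj Θ}

/-- `Θ̂ = restr(Θ) \ {0}` (with `0` modelled by `none`). -/
def hatS {R Q : Type*} (restr : R → Option Q) (Θ : Set R) : Set Q :=
  {q | ∃ θ ∈ Θ, restr θ = some q}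

/-- `Υ̃ = restr⁻¹(Υ ∪ {0})`. -/
def tildeS {R Q : Type*} (restr : R → Option Q) (Υ : Set Q) : Set R :=
  {θ | restr θ = none ∨ ∃ q ∈ Υ, restr θ = some q}

/-- A subset of `Δ_ℝ` is ℚ-rational if it is of the form `Υ̃` for some `Υ ⊆ Δ_ℚ`. -/
def QRat {R Q : Type*} (restr : R → Option Q) (Θ : Set R) : Prop :=
  ∃ Υ : Set Q, Θ = tildeS restr Υ

namespace GeomRatAux

variable {α : Type*} {adj : Option α → Option α → Prop}

/-- The relation restricted to `Θ ∪ {∗}`. -/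
def rrel (adj : Option α → Option α → Prop) (Θ : Set α) : Option α → Option α → Prop :=
  fun a b => a ∈ insert (none : Option α) (Option.some '' Θ) ∧
    b ∈ insert (none : Option α) (Option.some '' Θ) ∧ adj a b

lemma mem_insert_none {Θ : Set α} {a : Option α} :
    a ∈ insert (none : Option α) (Option.some '' Θ) ↔ a = none ∨ ∃ x ∈ Θ, a = some x := by
  constructor
  · rintro (rfl | ⟨x, hx, rfl⟩)
    · exact Or.inl rfl
    · exact Or.inr ⟨x, hx, rfl⟩
  · rintro (rfl | ⟨x, hx, rfl⟩)
    · exact Set.mem_insert _ _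
    · exact Set.mem_insert_of_mem _ ⟨x, hx, rfl⟩

lemma rrel_symm (hadj : Symmetric adj) (Θ : Set α) : Symmetric (rrel adj Θ) :=
  fun _ _ ⟨ha, hb, h⟩ => ⟨hb, ha, hadj h⟩

lemma rrel_mono {Θ Θ' : Set α} (h : Θ ⊆ Θ') : ∀ a b, rrel adj Θ a b → rrel adj Θ' a b := by
  rintro a b ⟨ha, hb, hab⟩
  exact ⟨Set.insert_subset_insert (Set.image_mono h) ha,
    Set.insert_subset_insert (Set.image_mono h) hb, hab⟩

/-- `x` can reach `∗` within `Θ ∪ {∗}`. -/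
def reach (adj : Option α → Option α → Prop) (Θ : Set α) (x : α) : Prop :=
  Relation.ReflTransGen (rrel adj Θ) (some x) none

/-- Key characterization of `κ`. -/
lemma kap_eq (hadj : Symmetric adj) (Θ : Set α) :
    kap adj Θ = {x | x ∈ Θ ∧ reach adj Θ x} := by
  ext x
  constructor
  · rintro ⟨Υ, ⟨hsub, hconn⟩, hx⟩
    refine ⟨hsub hx, ?_⟩
    have h := hconn (some x) (Set.mem_insert_of_mem _ ⟨x, hx, rfl⟩) none (Set.mem_insert _ _)
    exact Relation.ReflTransGen.mono (fun a b hab => rrel_mono hsub a b hab) _ _ h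
  · rintro ⟨hxΘ, hxr⟩
    set W : Set α := {y | y ∈ Θ ∧ reach adj Θ y} with hW
    have hWsub : W ⊆ Θ := fun y hy => hy.1
    -- every point of `W ∪ {∗}` reaches `∗` inside `W ∪ {∗}`
    have key : ∀ a : Option α, Relation.ReflTransGen (rrel adj Θ) a none →
        a ∈ insert (none : Option α) (Option.some '' W) →
        Relation.ReflTransGen (rrel adj W) a none := by
      intro a h
      induction h using Relation.ReflTransGen.head_induction_on with
      | refl => intro _; exact Relation.ReflTransGen.refl
      | head hac hc ih =>
        rename_i a c
        intro haS
        have hcS : c ∈ insert (none : Option α) (Option.some '' W) := by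
          rcases mem_insert_none.mp hac.2.1 with rfl | ⟨v, hv, rfl⟩
          · exact Set.mem_insert _ _
          · exact Set.mem_insert_of_mem _ ⟨v, ⟨hv, hc⟩, rfl⟩
        exact Relation.ReflTransGen.head ⟨haS, hcS, hac.2.2⟩ (ih hcS)
    have hconn : sigmaConn adj W := by
      intro a ha b hb
      have h1 : Relation.ReflTransGen (rrel adj W) a none := by
        rcases mem_insert_none.mp ha with rfl | ⟨w, hw, rfl⟩
        · exact Relation.ReflTransGen.refl
        · exact key _ hw.2 ha
      have h2 : Relation.ReflTransGen (rrel adj W) b none := by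
        rcases mem_insert_none.mp hb with rfl | ⟨w, hw, rfl⟩
        · exact Relation.ReflTransGen.refl
        · exact key _ hw.2 hb
      exact h1.trans ((@Relation.ReflTransGen.stdSymm _ _ ⟨fun _ _ h => rrel_symm hadj W h⟩).symm _ _ h2)
    exact ⟨W, ⟨hWsub, hconn⟩, ⟨hxΘ, hxr⟩⟩

lemma kap_subset (Θ : Set α) : kap adj Θ ⊆ Θ := by
  rintro x ⟨Υ, ⟨hsub, _⟩, hx⟩; exact hsub hx

lemma subset_om (Θ : Set α) : Θ ⊆ om adj Θ := fun x hx => ⟨Θ, rfl, hx⟩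

lemma subset_om_of_kap_eq {Υ Θ : Set α} (h : kap adj Υ = kap adj Θ) : Υ ⊆ om adj Θ :=
  fun x hx => ⟨Υ, h, hx⟩

/-- `κ(ω(Θ)) = κ(Θ)`. -/
lemma kap_om (hadj : Symmetric adj) (Θ : Set α) : kap adj (om adj Θ) = kap adj Θ := by
  apply Set.Subset.antisymm
  · intro x hx
    rw [kap_eq hadj] at hx
    obtain ⟨hxo, hxr⟩ := hx
    have key : ∀ a : Option α, Relation.ReflTransGen (rrel adj (om adj Θ)) a none →
        a = none ∨ ∃ u, a = some u ∧ u ∈ kap adj Θ := by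
      intro a h
      induction h using Relation.ReflTransGen.head_induction_on with
      | refl => exact Or.inl rfl
      | head hac hc ih =>
        rename_i a c
        rcases mem_insert_none.mp hac.1 with rfl | ⟨u, hu, rfl⟩
        · exact Or.inl rfl
        · refine Or.inr ⟨u, rfl, ?_⟩
          obtain ⟨Υi, hκi, hui⟩ := hu
          rw [← hκi, kap_eq hadj]
          refine ⟨hui, ?_⟩
          rcases ih with rfl | ⟨v, rfl, hv⟩
          · exact Relation.ReflTransGen.single
              ⟨Set.mem_insert_of_mem _ ⟨u, hui, rfl⟩, Set.mem_insert _ _, hac.2.2⟩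
          · rw [← hκi, kap_eq hadj] at hv
            exact Relation.ReflTransGen.head
              ⟨Set.mem_insert_of_mem _ ⟨u, hui, rfl⟩,
               Set.mem_insert_of_mem _ ⟨v, hv.1, rfl⟩, hac.2.2⟩ hv.2
    rcases key _ hxr with h | ⟨u, hu, hmem⟩
    · exact absurd h (by simp)
    · rwa [Option.some_inj.mp hu.symm] at hmem
  · rintro x ⟨Υ, ⟨hsub, hconn⟩, hx⟩
    exact ⟨Υ, ⟨hsub.trans (subset_om Θ), hconn⟩, hx⟩

end GeomRatAux

namespace GeomRatAux

lemma hat_mono {R Q : Type*} {restr : R → Option Q} {Θ Θ' : Set R} (h : Θ ⊆ Θ') :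
    hatS restr Θ ⊆ hatS restr Θ' := by
  rintro q ⟨θ, hθ, he⟩; exact ⟨θ, h hθ, he⟩

end GeomRatAux

/-- Lemma 17.4 of the paper, combinatorial content.
Under hypotheses (H1), (H2), (H3) and geometric rationality (GR):
(a) `(ω(Υ))~ = ω(Υ̃)` for every `Υ ⊆ Δ_ℚ`; and
(b) `(ω(Θ))^ = ω(Θ̂)` for every `Θ ⊆ Δ_ℝ` such that `ω(Θ)` is ℚ-rational. -/
theorem geometricRationality
    {R Q : Type*} [Finite R] [Finite Q]
    (adjR : Option R → Option R → Prop) (hadjR : Symmetric adjR)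
    (adjQ : Option Q → Option Q → Prop) (hadjQ : Symmetric adjQ)
    (restr : R → Option Q)
    (H1 : ∀ Υ : Set Q, hatS restr (tildeS restr Υ) = Υ)
    (H2 : ∀ Θ : Set R, kap adjQ (hatS restr Θ) = hatS restr (kap adjR Θ))
    (H3 : ∀ Θ : Set R, QRat restr (om adjR Θ) →
      kap adjR Θ = kap adjR (tildeS restr (hatS restr (kap adjR Θ))))
    (GR : ∀ Υ : Set Q, QRat restr (om adjR (tildeS restr Υ))) :
    (∀ Υ : Set Q, tildeS restr (om adjQ Υ) = om adjR (tildeS restr Υ)) ∧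
    (∀ Θ : Set R, QRat restr (om adjR Θ) →
      hatS restr (om adjR Θ) = om adjQ (hatS restr Θ)) := by
  have om_fixed : ∀ Θ : Set R, QRat restr Θ → tildeS restr (hatS restr Θ) = Θ := by
    rintro Θ ⟨Υ, rfl⟩; rw [H1]
  have hb : ∀ Θ : Set R, QRat restr (om adjR Θ) →
      hatS restr (om adjR Θ) = om adjQ (hatS restr Θ) := by
    intro Θ hQR
    apply Set.Subset.antisymm
    · apply GeomRatAux.subset_om_of_kap_eq
      rw [H2, H2, GeomRatAux.kap_om hadjR]
    · rintro q ⟨Υ, hκ, hq⟩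
      have hκt : kap adjR (tildeS restr Υ) = kap adjR Θ := by
        have e1 := H3 (tildeS restr Υ) (GR Υ)
        have e2 := H3 Θ hQR
        have e3 : hatS restr (kap adjR (tildeS restr Υ)) = hatS restr (kap adjR Θ) := by
          rw [← H2, H1, hκ, H2]
        rw [e1, e3, ← e2]
      have hsub : tildeS restr Υ ⊆ om adjR Θ := GeomRatAux.subset_om_of_kap_eq hκt
      have hq' : q ∈ hatS restr (tildeS restr Υ) := by rw [H1]; exact hq
      exact GeomRatAux.hat_mono hsub hq'
  refine ⟨fun Υ => ?_, hb⟩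
  have h1 := hb (tildeS restr Υ) (GR Υ)
  rw [H1] at h1
  rw [← h1, om_fixed _ (GR Υ)]
end
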